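/- For every feasible HRLQ instance there exists a feasible relaxed stable matching whose size is at least the size of a stable matching of the instance (where the stable matching is computed ignoring lower quotas). -/

import Mathlib

/-- An HRLQ instance: bipartite graph on residents `R` and hospitals `H` with
strict preferences encoded as rank functions (lower rank = more preferred)
and lower/upper quotas per hospital. -/
structure HRLQ (R H : Type) where
  E : R → H → Prop
  rPref : R → H → ℕ
  hPref : H → R → ℕ
  lq : H → ℕ
  uq : H → ℕ

namespace HRLQ

variable {R H : Type}

/-- residents matched to hospital `h` -/
def matchedTo (M : R → Option H) (h : H) : Set R := {r | M r = some h}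

/-- size of a matching -/
noncomputable def msize (M : R → Option H) : ℕ := {r | M r ≠ none}.ncard

variable (I : HRLQ R H)

/-- resident `r` strictly prefers hospital `h` to assignment `o`
    (being unmatched is least preferred); `h` must be acceptable to `r`. -/
def PrefersH (r : R) (h : H) (o : Option H) : Prop :=
  I.E r h ∧ ∀ h', o = some h' → I.rPref r h < I.rPref r h'

def IsMatching (M : R → Option H) : Prop :=
  (∀ r h, M r = some h → I.E r h) ∧ ∀ h, (matchedTo M h).ncard ≤ I.uq h

def Feasible (M : R → Option H) : Prop :=
  ∀ h, I.lq h ≤ (matchedTo M h).ncard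

def Blocks (M : R → Option H) (r : R) (h : H) : Prop :=
  I.E r h ∧ M r ≠ some h ∧ I.PrefersH r h (M r) ∧
    ((matchedTo M h).ncard < I.uq h ∨ ∃ r' ∈ matchedTo M h, I.hPref h r < I.hPref h r')

def Stable (M : R → Option H) : Prop := ∀ r h, ¬ I.Blocks M r h

def Envies (M : R → Option H) (r r' : R) : Prop :=
  ∃ h, M r' = some h ∧ I.PrefersH r h (M r) ∧ I.hPref h r < I.hPref h r'

def EnvyFree (M : R → Option H) : Prop := ∀ r r', ¬ I.Envies M r r'

def RelaxedStable (M : R → Option H) : Prop :=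
  (∀ h, {r | r ∈ matchedTo M h ∧ ∃ h', I.Blocks M r h'}.ncard ≤ I.lq h) ∧
  ∀ r, M r = none → ∀ h, ¬ I.Blocks M r h

/-- preferences are strict -/
def StrictPrefs : Prop :=
  (∀ r, Function.Injective (I.rPref r)) ∧ ∀ h, Function.Injective (I.hPref h)

end HRLQ

section Auxiliary

open HRLQ Classical

variable {R H : Type} [Fintype R] [Fintype H]

/-- A big constant larger than every resident rank. -/
noncomputable def bigB (J : HRLQ R H) : ℕ :=
  (Finset.univ.sup fun p : R × H => J.rPref p.1 p.2) + 1

lemma rPref_lt_bigB (J : HRLQ R H) (r : R) (h : H) : J.rPref r h < bigB J :=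
  Nat.lt_succ_of_le (Finset.le_sup (f := fun p : R × H => J.rPref p.1 p.2)
    (Finset.mem_univ (r, h)))

/-- potential function for the proposal process -/
noncomputable def cost (J : HRLQ R H) (N : R → Option H) : ℕ :=
  ∑ r : R, (N r).elim (bigB J) (J.rPref r)

/-- quasi-stability: every admirer of a hospital is less preferred (by that
hospital) than all of its current residents. -/
def CondQ (J : HRLQ R H) (N : R → Option H) : Prop :=
  ∀ r h, J.E r h → N r ≠ some h → J.PrefersH r h (N r) →
    ∀ r' ∈ matchedTo N h, J.hPref h r' < J.hPref h r

lemma stable_condQ (J : HRLQ R H) (hinj : ∀ h, Function.Injective (J.hPref h))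
    {N : R → Option H} (hst : J.Stable N) : CondQ J N := by
  intro r h hE hne hpref r' hr'
  by_contra hlt
  push_neg at hlt
  have hrr : r' ≠ r := fun e => hne (e ▸ hr')
  have hstrict : J.hPref h r < J.hPref h r' :=
    lt_of_le_of_ne hlt (fun e => hrr (hinj h e.symm))
  exact hst r h ⟨hE, hne, hpref, Or.inr ⟨r', hr', hstrict⟩⟩

lemma matchedTo_update_subset_insert (M : R → Option H) (a : R) (h₀ h : H) :
    matchedTo (Function.update M a (some h₀)) h ⊆ insert a (matchedTo M h) := by
  intro r hr
  have hr' : Function.update M a (some h₀) r = some h := hr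
  by_cases hi : r = a
  · rw [hi]; exact Set.mem_insert _ _
  · rw [Function.update_of_ne hi] at hr'
    exact Set.mem_insert_of_mem _ hr'

lemma matchedTo_update_subset (M : R → Option H) (a : R) (h₀ h : H) (hne : h ≠ h₀) :
    matchedTo (Function.update M a (some h₀)) h ⊆ matchedTo M h := by
  intro r hr
  have hr' : Function.update M a (some h₀) r = some h := hr
  by_cases hi : r = a
  · rw [hi, Function.update_self] at hr'
    exact absurd (Option.some_inj.mp hr').symm hne
  · rw [Function.update_of_ne hi] at hr'
    exact hr'

lemma msize_le_update (M : R → Option H) (a : R) (h₀ : H) :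
    HRLQ.msize M ≤ HRLQ.msize (Function.update M a (some h₀)) := by
  apply Set.ncard_le_ncard _ (Set.toFinite _)
  intro r hr
  have hr' : M r ≠ none := hr
  show Function.update M a (some h₀) r ≠ none
  by_cases hi : r = a
  · rw [hi, Function.update_self]; exact Option.some_ne_none _
  · rw [Function.update_of_ne hi]; exact hr'

/-- Core lemma: from any quasi-stable matching one can reach a stable matching
of at least the same size (a vacancy-chain / proposal process). -/
lemma core (J : HRLQ R H) (hinj : ∀ h, Function.Injective (J.hPref h)) :
    ∀ (n : ℕ) (N : R → Option H), cost J N ≤ n → J.IsMatching N → CondQ J N →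
    ∃ M, J.IsMatching M ∧ J.Stable M ∧ HRLQ.msize N ≤ HRLQ.msize M := by
  intro n
  induction n using Nat.strong_induction_on with
  | _ n ih =>
  intro N hcost hmatch hQ
  by_cases hst : J.Stable N
  · exact ⟨N, hmatch, hst, le_rfl⟩
  · simp only [HRLQ.Stable, not_forall, not_not] at hst
    obtain ⟨r₀, hh, hE₀, hne₀, hpref₀, hdisj₀⟩ := hst
    have hund : (matchedTo N hh).ncard < J.uq hh := by
      rcases hdisj₀ with h | ⟨r', hr', hlt⟩
      · exact h
      · exact absurd hlt (lt_asymm (hQ r₀ hh hE₀ hne₀ hpref₀ r' hr'))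
    set S : Set R := {r | J.E r hh ∧ N r ≠ some hh ∧ J.PrefersH r hh (N r)} with hSdef
    have hr₀S : r₀ ∈ S := ⟨hE₀, hne₀, hpref₀⟩
    obtain ⟨rh, hrhS, hmin⟩ :=
      Set.exists_min_image S (J.hPref hh) (Set.toFinite S) ⟨r₀, hr₀S⟩
    set N' := Function.update N rh (some hh) with hN'
    have hN'rh : N' rh = some hh := Function.update_self _ _ _
    have hN'ne : ∀ r, r ≠ rh → N' r = N r := fun r hr => Function.update_of_ne hr _ _
    have hsub1 : ∀ h, matchedTo N' h ⊆ insert rh (matchedTo N h) := fun h =>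
      matchedTo_update_subset_insert N rh hh h
    have hsub2 : ∀ h, h ≠ hh → matchedTo N' h ⊆ matchedTo N h := fun h hne =>
      matchedTo_update_subset N rh hh h hne
    -- cost decreases
    have hkey : J.rPref rh hh < (N rh).elim (bigB J) (J.rPref rh) := by
      cases hNi : N rh with
      | none => exact rPref_lt_bigB J rh hh
      | some h₂ =>
        rw [Option.elim_some]
        exact hrhS.2.2.2 h₂ hNi
    have hcost' : cost J N' < cost J N := by
      apply Finset.sum_lt_sum
      · intro i _
        by_cases hi : i = rh
        · rw [hi, hN'rh, Option.elim_some]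
          exact le_of_lt hkey
        · rw [hN'ne i hi]
      · refine ⟨rh, Finset.mem_univ rh, ?_⟩
        rw [hN'rh, Option.elim_some]
        exact hkey
    -- N' is a matching
    have hmatch' : J.IsMatching N' := by
      constructor
      · intro r h hr
        by_cases hi : r = rh
        · rw [hi, hN'rh] at hr
          rw [hi, ← Option.some_inj.mp hr]
          exact hrhS.1
        · rw [hN'ne r hi] at hr
          exact hmatch.1 r h hr
      · intro h
        by_cases hcase : h = hh
        · subst hcase
          calc (matchedTo N' h).ncard ≤ (insert rh (matchedTo N h)).ncard :=
                Set.ncard_le_ncard (hsub1 h) (Set.toFinite _)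
            _ ≤ (matchedTo N h).ncard + 1 := Set.ncard_insert_le _ _
            _ ≤ J.uq h := Nat.succ_le_of_lt hund
        · exact le_trans (Set.ncard_le_ncard (hsub2 h hcase) (Set.toFinite _)) (hmatch.2 h)
    -- CondQ is preserved
    have hQ' : CondQ J N' := by
      intro r h hE hne hpref r' hr'
      by_cases hrne : r = rh
      · subst hrne
        have hhne : h ≠ hh := fun e => hne (by rw [e]; exact hN'rh)
        have h1 : J.rPref r h < J.rPref r hh := hpref.2 hh hN'rh
        have hpref2 : J.PrefersH r h (N r) :=
          ⟨hE, fun h' hh' => lt_trans h1 (hrhS.2.2.2 h' hh')⟩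
        have hNne : N r ≠ some h := fun e => absurd (hrhS.2.2.2 h e) (lt_asymm h1)
        exact hQ r h hE hNne hpref2 r' (hsub2 h hhne hr')
      · have hNr : N' r = N r := hN'ne r hrne
        have hNne : N r ≠ some h := by rw [← hNr]; exact hne
        have hprefN : J.PrefersH r h (N r) := by rw [← hNr]; exact hpref
        by_cases hcase : h = hh
        · subst hcase
          by_cases h2 : r' = rh
          · rw [h2]
            have hle := hmin r ⟨hE, hNne, hprefN⟩
            exact lt_of_le_of_ne hle (fun e => hrne ((hinj h e).symm))
          · have hr'' : N r' = some h := by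
              have : N' r' = some h := hr'
              rwa [hN'ne r' h2] at this
            exact hQ r h hE hNne hprefN r' hr''
        · exact hQ r h hE hNne hprefN r' (hsub2 h hcase hr')
    -- size does not decrease
    have hms : HRLQ.msize N ≤ HRLQ.msize N' := msize_le_update N rh hh
    obtain ⟨M, h1, h2, h3⟩ :=
      ih (cost J N') (lt_of_lt_of_le hcost' hcost) N' le_rfl hmatch' hQ'
    exact ⟨M, h1, h2, le_trans hms h3⟩

/-- the rank function where a forced resident has its forced hospital promoted
to the top of its list -/
noncomputable def rankA (I : HRLQ R H) (A : R → Option H) (r : R) (h : H) : ℕ :=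
  (A r).elim (I.rPref r h) (fun h₀ => if h = h₀ then 0 else I.rPref r h + 1)

/-- the instance with promoted preferences -/
noncomputable def IA (I : HRLQ R H) (A : R → Option H) : HRLQ R H :=
  { E := I.E, rPref := rankA I A, hPref := I.hPref, lq := I.lq, uq := I.uq }

@[simp] lemma IA_E (I : HRLQ R H) (A : R → Option H) : (IA I A).E = I.E := rfl
@[simp] lemma IA_rPref (I : HRLQ R H) (A : R → Option H) : (IA I A).rPref = rankA I A := rfl
@[simp] lemma IA_hPref (I : HRLQ R H) (A : R → Option H) : (IA I A).hPref = I.hPref := rfl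
@[simp] lemma IA_uq (I : HRLQ R H) (A : R → Option H) : (IA I A).uq = I.uq := rfl
@[simp] lemma IA_lq (I : HRLQ R H) (A : R → Option H) : (IA I A).lq = I.lq := rfl

/-- in a matching stable for the promoted instance, any resident involved in a
blocking pair of the original instance is forced, and matched to its forced
hospital. -/
lemma blocks_forced (I : HRLQ R H) (A : R → Option H) {M : R → Option H} {r : R} {h : H}
    (hst : (IA I A).Stable M) (hb : I.Blocks M r h) :
    ∃ h₀, A r = some h₀ ∧ M r = some h₀ := by
  obtain ⟨hE, hne, ⟨hE', hpref⟩, hdisj⟩ := hb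
  cases hA : A r with
  | none =>
    exfalso
    apply hst r h
    refine ⟨hE, hne, ⟨hE, ?_⟩, hdisj⟩
    intro h' hh'
    show rankA I A r h < rankA I A r h'
    simp only [rankA, hA, Option.elim_none]
    exact hpref h' hh'
  | some h₀ =>
    by_cases hMr : M r = some h₀
    · exact ⟨h₀, rfl, hMr⟩
    · exfalso
      apply hst r h
      refine ⟨hE, hne, ⟨hE, ?_⟩, hdisj⟩
      intro h' hh'
      have hh'ne : h' ≠ h₀ := fun e => hMr (e ▸ hh')
      show rankA I A r h < rankA I A r h'
      simp only [rankA, hA, Option.elim_some]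
      rw [if_neg hh'ne]
      by_cases hcase : h = h₀
      · simp [hcase]
      · rw [if_neg hcase]
        exact Nat.succ_lt_succ (hpref h' hh')

/-- Main loop: iteratively force residents into deficient hospitals. -/
lemma outer (I : HRLQ R H) (hinj : ∀ h, Function.Injective (I.hPref h))
    (Mf : R → Option H) (hMfM : I.IsMatching Mf) (hMfF : I.Feasible Mf)
    (Ms : R → Option H) :
    ∀ (n : ℕ) (A M : R → Option H),
      {r | A r = none}.ncard ≤ n →
      (∀ r h, A r = some h → Mf r = some h) →
      (∀ h, {r | A r = some h}.ncard ≤ I.lq h) →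
      (IA I A).IsMatching M →
      (IA I A).Stable M →
      HRLQ.msize Ms ≤ HRLQ.msize M →
      ∃ M', I.IsMatching M' ∧ I.Feasible M' ∧ I.RelaxedStable M' ∧
        HRLQ.msize Ms ≤ HRLQ.msize M' := by
  have hlequq : ∀ h, I.lq h ≤ I.uq h := fun h => le_trans (hMfF h) (hMfM.2 h)
  intro n
  induction n using Nat.strong_induction_on with
  | _ n ih =>
  intro A M hn hA1 hA2 hMmatch hMstable hsz
  by_cases hfeas : I.Feasible M
  · refine ⟨M, hMmatch, hfeas, ⟨?_, ?_⟩, hsz⟩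
    · intro h
      refine le_trans (Set.ncard_le_ncard ?_ (Set.toFinite _)) (hA2 h)
      rintro r ⟨hrM, h', hb⟩
      obtain ⟨h₀, hAr, hMr⟩ := blocks_forced I A hMstable hb
      have hMr2 : M r = some h := hrM
      rw [hMr2] at hMr
      show A r = some h
      rw [Option.some_inj.mp hMr]
      exact hAr
    · intro r hru h hb
      obtain ⟨h₀, hAr, hMr⟩ := blocks_forced I A hMstable hb
      rw [hru] at hMr
      exact Option.some_ne_none _ hMr.symm
  · simp only [HRLQ.Feasible, not_forall, not_le] at hfeas
    obtain ⟨h₀, hdef⟩ := hfeas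
    -- all residents forced to h₀ are matched to h₀
    have hforced : ∀ r, A r = some h₀ → M r = some h₀ := by
      intro r hAr
      by_contra hne
      apply hMstable r h₀
      have hE : I.E r h₀ := hMfM.1 r h₀ (hA1 r h₀ hAr)
      refine ⟨hE, hne, ⟨hE, ?_⟩, Or.inl (lt_of_lt_of_le hdef (hlequq h₀))⟩
      intro h' hh'
      have hh'ne : h' ≠ h₀ := fun e => hne (e ▸ hh')
      show rankA I A r h₀ < rankA I A r h'
      simp only [rankA, hAr, Option.elim_some]
      rw [if_neg hh'ne]
      simp
    have hfle : {r | A r = some h₀}.ncard ≤ (matchedTo M h₀).ncard :=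
      Set.ncard_le_ncard (fun r hr => hforced r hr) (Set.toFinite _)
    -- find a fresh resident to force to h₀
    have hT : ∃ rs, Mf rs = some h₀ ∧ A rs = none := by
      by_contra hT
      push_neg at hT
      have hsub : matchedTo Mf h₀ ⊆ {r | A r = some h₀} := by
        intro r hr
        have hr2 : Mf r = some h₀ := hr
        cases hAr : A r with
        | none => exact absurd hAr (hT r hr2)
        | some h' =>
          have h2 := hA1 r h' hAr
          rw [hr2] at h2
          show A r = some h₀
          rw [Option.some_inj.mp h2]
          exact hAr
      have h1 := Set.ncard_le_ncard hsub (Set.toFinite _)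
      have h2 := hMfF h₀
      omega
    obtain ⟨rs, hrs1, hrs2⟩ := hT
    set A' := Function.update A rs (some h₀) with hA'def
    set M₀ := Function.update M rs (some h₀) with hM₀def
    have hA'rs : A' rs = some h₀ := Function.update_self _ _ _
    have hA'ne : ∀ r, r ≠ rs → A' r = A r := fun r hr => Function.update_of_ne hr _ _
    have hM₀rs : M₀ rs = some h₀ := Function.update_self _ _ _
    have hM₀ne : ∀ r, r ≠ rs → M₀ r = M r := fun r hr => Function.update_of_ne hr _ _
    have hrankeq : ∀ r, r ≠ rs → rankA I A' r = rankA I A r := by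
      intro r hr
      funext h
      simp only [rankA, hA'ne r hr]
    -- measure decreases
    have hmeas : {r | A' r = none}.ncard < {r | A r = none}.ncard := by
      apply Set.ncard_lt_ncard _ (Set.toFinite _)
      constructor
      · intro r hr
        have hr2 : A' r = none := hr
        by_cases hi : r = rs
        · rw [hi, hA'rs] at hr2
          exact absurd hr2 (Option.some_ne_none _)
        · rw [hA'ne r hi] at hr2
          exact hr2
      · intro hcon
        have h3 : A' rs = none := hcon hrs2
        rw [hA'rs] at h3
        exact Option.some_ne_none _ h3
    -- quasi-stability of M₀ in the new instance
    have hQ : CondQ (IA I A) M := stable_condQ (IA I A) hinj hMstable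
    have hQ0 : CondQ (IA I A') M₀ := by
      intro r h hE hne hpref r' hr'
      by_cases hrne : r = rs
      · exfalso
        subst hrne
        have h1 : rankA I A' r h < rankA I A' r h₀ := hpref.2 h₀ hM₀rs
        have h2 : rankA I A' r h₀ = 0 := by
          simp [rankA, hA'rs]
        rw [h2] at h1
        exact Nat.not_lt_zero _ h1
      · have hMr : M₀ r = M r := hM₀ne r hrne
        have hNne : M r ≠ some h := by rw [← hMr]; exact hne
        have hprefA : (IA I A).PrefersH r h (M r) := by
          refine ⟨hE, ?_⟩
          intro h' hh'
          have h4 := hpref.2 h' (by rw [hMr]; exact hh')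
          show rankA I A r h < rankA I A r h'
          rw [← hrankeq r hrne]
          exact h4
        by_cases hcase : h = h₀
        · exfalso
          subst hcase
          exact hMstable r h ⟨hE, hNne, hprefA, Or.inl (lt_of_lt_of_le hdef (hlequq h))⟩
        · have hr'' : r' ∈ matchedTo M h :=
            matchedTo_update_subset M rs h₀ h hcase hr'
          exact hQ r h hE hNne hprefA r' hr''
    -- M₀ is a matching in the new instance
    have hM₀match : (IA I A').IsMatching M₀ := by
      constructor
      · intro r h hr
        by_cases hi : r = rs
        · rw [hi, hM₀rs] at hr
          rw [hi, ← Option.some_inj.mp hr]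
          exact hMfM.1 rs h₀ hrs1
        · rw [hM₀ne r hi] at hr
          exact hMmatch.1 r h hr
      · intro h
        by_cases hcase : h = h₀
        · subst hcase
          calc (matchedTo M₀ h).ncard ≤ (insert rs (matchedTo M h)).ncard :=
                Set.ncard_le_ncard (matchedTo_update_subset_insert M rs h h) (Set.toFinite _)
            _ ≤ (matchedTo M h).ncard + 1 := Set.ncard_insert_le _ _
            _ ≤ I.lq h := Nat.succ_le_of_lt hdef
            _ ≤ I.uq h := hlequq h
        · exact le_trans
            (Set.ncard_le_ncard (matchedTo_update_subset M rs h₀ h hcase) (Set.toFinite _))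
            (hMmatch.2 h)
    -- size does not decrease from M to M₀
    have hszM₀ : HRLQ.msize M ≤ HRLQ.msize M₀ := msize_le_update M rs h₀
    -- stabilize
    obtain ⟨M', hM'match, hM'stable, hM'size⟩ :=
      core (IA I A') hinj (cost (IA I A') M₀) M₀ le_rfl hM₀match hQ0
    -- invariants for A'
    have hA1' : ∀ r h, A' r = some h → Mf r = some h := by
      intro r h hr
      by_cases hi : r = rs
      · rw [hi, hA'rs] at hr
        rw [hi, ← Option.some_inj.mp hr]
        exact hrs1
      · rw [hA'ne r hi] at hr
        exact hA1 r h hr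
    have hA2' : ∀ h, {r | A' r = some h}.ncard ≤ I.lq h := by
      intro h
      by_cases hcase : h = h₀
      · subst hcase
        have hsub : {r | A' r = some h} ⊆ insert rs {r | A r = some h} := by
          intro r hr
          have hr2 : A' r = some h := hr
          by_cases hi : r = rs
          · rw [hi]; exact Set.mem_insert _ _
          · rw [hA'ne r hi] at hr2
            exact Set.mem_insert_of_mem _ hr2
        calc {r | A' r = some h}.ncard ≤ (insert rs {r | A r = some h}).ncard :=
              Set.ncard_le_ncard hsub (Set.toFinite _)
          _ ≤ {r | A r = some h}.ncard + 1 := Set.ncard_insert_le _ _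
          _ ≤ I.lq h := by omega
      · have hsub : {r | A' r = some h} ⊆ {r | A r = some h} := by
          intro r hr
          have hr2 : A' r = some h := hr
          by_cases hi : r = rs
          · rw [hi, hA'rs] at hr2
            exact absurd (Option.some_inj.mp hr2).symm hcase
          · rw [hA'ne r hi] at hr2
            exact hr2
        exact le_trans (Set.ncard_le_ncard hsub (Set.toFinite _)) (hA2 h)
    exact ih ({r | A' r = none}.ncard) (lt_of_lt_of_le hmeas hn) A' M' le_rfl hA1' hA2'
      hM'match hM'stable (le_trans hsz (le_trans hszM₀ hM'size))

end Auxiliary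

/-- Every feasible HRLQ instance admits a feasible relaxed stable matching whose
size is at least the size of a stable matching of the instance (computed
ignoring lower quotas). -/
theorem relaxed_stable_at_least_stable_size
    {R H : Type} [Fintype R] [Fintype H] (I : HRLQ R H)
    (hstrict : I.StrictPrefs)
    (hfeas : ∃ M, I.IsMatching M ∧ I.Feasible M)
    (Ms : R → Option H) (hMs : I.IsMatching Ms) (hMsStable : I.Stable Ms) :
    ∃ M, I.IsMatching M ∧ I.Feasible M ∧ I.RelaxedStable M ∧
      HRLQ.msize Ms ≤ HRLQ.msize M := by
  classical
  obtain ⟨Mf, hMfM, hMfF⟩ := hfeas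
  have hmatch0 : (IA I (fun _ => none)).IsMatching Ms := hMs
  have hstable0 : (IA I (fun _ => none)).Stable Ms := hMsStable
  exact outer I hstrict.2 Mf hMfM hMfF Ms ({r : R | (fun _ : R => (none : Option H)) r = none}.ncard)
    (fun _ => none) Ms le_rfl (fun r h hr => by simp at hr)
    (fun h => by simp) hmatch0 hstable0 le_rfl
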